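/- Let X be a random vector with finite support X ⊂ ℝ^d that factorizes as a Cartesian product X = X_1 × ⋯ × X_d of non-empty finite sets. Then the counting measure ν on X equals the product of the counting measures ν_i on the X_i, the law of X is absolutely continuous with respect to ν, and there exists M ∈ (0,1] such that the density f of X satisfies f ≥ M f_A f_{A^c} for every subset A of {1,...,d}, where f_A is the marginal density of X_A. -/

import Mathlib

open MeasureTheory

/-- If the law `P` of a random vector `X` in `ℝ^d` has finite support which factorizes
as a Cartesian product `𝒳 = 𝒳_1 × ⋯ × 𝒳_d` of non-empty finite sets, then the counting
measure `ν` on `𝒳` is the product of the counting measures `ν_i` on the `𝒳_i`, the law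
`P` is absolutely continuous with respect to `ν`, and there exists `M ∈ (0,1]` such that
the density `f(x) = P{x}` satisfies `f ≥ M f_A f_{A^c}` on the support, for every subset
`A` of `{1,…,d}`, where `f_A(x_A) = P(X_A = x_A)` is the marginal density. -/
theorem finite_product_support_GHD_assumption
    {d : ℕ} (P : Measure (Fin d → ℝ)) [IsProbabilityMeasure P]
    (S : Fin d → Finset ℝ) (hS : ∀ i, (S i).Nonempty)
    (hsupp : ∀ x : Fin d → ℝ, 0 < P {x} ↔ ∀ i, x i ∈ S i)
    (hdiscrete : P {x : Fin d → ℝ | ∀ i, x i ∈ S i} = 1) :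
    Measure.count.restrict {x : Fin d → ℝ | ∀ i, x i ∈ S i}
        = Measure.pi (fun i => Measure.count.restrict ((S i : Set ℝ))) ∧
    P ≪ Measure.count.restrict {x : Fin d → ℝ | ∀ i, x i ∈ S i} ∧
    ∃ M ∈ Set.Ioc (0 : ℝ) 1, ∀ A : Finset (Fin d), ∀ x : Fin d → ℝ,
      (∀ i, x i ∈ S i) →
      M * (P {y | ∀ i ∈ A, y i = x i}).toReal * (P {y | ∀ i ∈ Aᶜ, y i = x i}).toReal
        ≤ (P {x}).toReal := by
  classical
  have hTset : {x : Fin d → ℝ | ∀ i, x i ∈ S i}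
      = Set.pi Set.univ (fun i => ((S i : Set ℝ))) := by
    ext x; simp [Set.mem_pi]
  have hTmeas : MeasurableSet {x : Fin d → ℝ | ∀ i, x i ∈ S i} := by
    rw [hTset]
    exact MeasurableSet.univ_pi (fun i => (S i).measurableSet)
  refine ⟨?_, ?_, ?_⟩
  · -- product measure identity
    haveI : ∀ i, IsFiniteMeasure (Measure.count.restrict ((S i : Set ℝ))) := by
      intro i
      constructor
      rw [Measure.restrict_apply MeasurableSet.univ, Set.univ_inter,
        Measure.count_apply_finset]
      exact ENNReal.natCast_lt_top _
    refine (Measure.pi_eq ?_).symm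
    intro s hs
    rw [Measure.restrict_apply (MeasurableSet.univ_pi hs), hTset,
      ← Set.pi_inter_distrib]
    set F : ∀ i : Fin d, Finset ℝ := fun i => (S i).filter (fun a => a ∈ s i) with hF
    have hFi : ∀ i, s i ∩ (S i : Set ℝ) = ↑(F i) := by
      intro i; ext a; simp [hF, and_comm]
    have h1 : (Set.pi Set.univ fun i => s i ∩ (S i : Set ℝ))
        = ↑(Fintype.piFinset F) := by
      rw [Fintype.coe_piFinset]
      exact Set.pi_congr rfl (fun i _ => hFi i)
    rw [h1, Measure.count_apply_finset, Fintype.card_piFinset, Nat.cast_prod]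
    refine Finset.prod_congr rfl (fun i _ => ?_)
    rw [Measure.restrict_apply (hs i), hFi i, Measure.count_apply_finset]
  · -- absolute continuity
    refine Measure.AbsolutelyContinuous.mk (fun t ht h0 => ?_)
    rw [Measure.restrict_apply ht, Measure.count_eq_zero_iff] at h0
    have hPc : P {x : Fin d → ℝ | ∀ i, x i ∈ S i}ᶜ = 0 := by
      rw [prob_compl_eq_zero_iff hTmeas]; exact hdiscrete
    have : t ⊆ {x : Fin d → ℝ | ∀ i, x i ∈ S i}ᶜ := by
      intro x hx hxT
      exact absurd ⟨hx, hxT⟩ (Set.eq_empty_iff_forall_notMem.mp h0 x)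
    exact le_antisymm (hPc ▸ measure_mono this) zero_le
  · -- existence of M
    have hne : (Fintype.piFinset S).Nonempty := Fintype.piFinset_nonempty.mpr hS
    set m : ℝ := (Fintype.piFinset S).inf' hne (fun x => (P {x}).toReal) with hm
    have hmpos : 0 < m := by
      rw [hm]
      apply Finset.lt_inf'_iff hne |>.mpr
      intro x hx
      have hx' : ∀ i, x i ∈ S i := by
        intro i; exact Fintype.mem_piFinset.mp hx i
      exact ENNReal.toReal_pos ((hsupp x).mpr hx').ne' (measure_ne_top P _)
    refine ⟨min m 1, ⟨lt_min hmpos one_pos, min_le_right _ _⟩, fun A x hx => ?_⟩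
    have hmle : m ≤ (P {x}).toReal :=
      Finset.inf'_le _ (Fintype.mem_piFinset.mpr hx)
    have hA : (P {y | ∀ i ∈ A, y i = x i}).toReal ≤ 1 := by
      rw [← ENNReal.toReal_one]
      exact ENNReal.toReal_mono ENNReal.one_ne_top prob_le_one
    have hAc : (P {y | ∀ i ∈ Aᶜ, y i = x i}).toReal ≤ 1 := by
      rw [← ENNReal.toReal_one]
      exact ENNReal.toReal_mono ENNReal.one_ne_top prob_le_one
    have hA0 : 0 ≤ (P {y | ∀ i ∈ A, y i = x i}).toReal := ENNReal.toReal_nonneg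
    have hAc0 : 0 ≤ (P {y | ∀ i ∈ Aᶜ, y i = x i}).toReal := ENNReal.toReal_nonneg
    have hM0 : (0:ℝ) ≤ min m 1 := le_of_lt (lt_min hmpos one_pos)
    calc min m 1 * (P {y | ∀ i ∈ A, y i = x i}).toReal
          * (P {y | ∀ i ∈ Aᶜ, y i = x i}).toReal
        ≤ min m 1 * 1 * 1 := by
          apply mul_le_mul (mul_le_mul le_rfl hA hA0 hM0) hAc hAc0
          positivity
      _ = min m 1 := by ring
      _ ≤ m := min_le_left _ _
      _ ≤ (P {x}).toReal := hmle
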